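/- Let Γ₀ ⊂ C_b(S) be admissible. Then for all probability measures μ, ν on S, lim_{δ→0⁺} (1/δ) G_{δΓ₀}(μ‖ν) = W_{Γ₀}(μ−ν). -/

import Mathlib

open MeasureTheory BoundedContinuousFunction Real Filter

/-- The weak topology on `C_b(S)` induced by integration against finite measures. -/
noncomputable def weakTopology (S : Type*) [TopologicalSpace S] [MeasurableSpace S] :
    TopologicalSpace (S →ᵇ ℝ) :=
  ⨅ μ : {μ : Measure S // IsFiniteMeasure μ},
    TopologicalSpace.induced (fun f : S →ᵇ ℝ => ∫ x, f x ∂μ.1) inferInstance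

/-- Admissibility of `Γ ⊂ C_b(S)`. -/
def Admissible {S : Type*} [TopologicalSpace S] [MeasurableSpace S]
    (Γ : Set (S →ᵇ ℝ)) : Prop :=
  Convex ℝ Γ ∧ @IsClosed _ (weakTopology S) Γ ∧ (∀ g ∈ Γ, -g ∈ Γ) ∧
    (∀ r : ℝ, BoundedContinuousFunction.const S r ∈ Γ) ∧
    ∀ μ ν : Measure S, IsProbabilityMeasure μ → IsProbabilityMeasure ν → μ ≠ ν →
      ∃ g ∈ Γ, ∫ x, g x ∂μ ≠ ∫ x, g x ∂ν

/-- The `Γ`-divergence `G_Γ(μ‖ν)`. -/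
noncomputable def gDiv {S : Type*} [TopologicalSpace S] [MeasurableSpace S]
    (Γ : Set (S →ᵇ ℝ)) (μ ν : Measure S) : EReal :=
  ⨆ g ∈ Γ, (((∫ x, g x ∂μ) - Real.log (∫ x, Real.exp (g x) ∂ν) : ℝ) : EReal)

/-- `W_Γ(μ − γ) = sup_{g ∈ Γ} ∫ g d(μ−γ)`. -/
noncomputable def wGamma {S : Type*} [TopologicalSpace S] [MeasurableSpace S]
    (Γ : Set (S →ᵇ ℝ)) (μ γ : Measure S) : EReal :=
  ⨆ g ∈ Γ, (((∫ x, g x ∂μ) - ∫ x, g x ∂γ : ℝ) : EReal)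

/-- The scaled set `bΓ = {b·f : f ∈ Γ}`. -/
def scaleSet {S : Type*} [TopologicalSpace S] (b : ℝ) (Γ : Set (S →ᵇ ℝ)) :
    Set (S →ᵇ ℝ) := (fun g => b • g) '' Γ

/-- Relative entropy via its Donsker–Varadhan representation over bounded measurable functions. -/
noncomputable def klSup {S : Type*} [MeasurableSpace S] (μ ν : Measure S) : EReal :=
  ⨆ (g : S → ℝ) (_ : Measurable g ∧ ∃ C, ∀ x, |g x| ≤ C),
    (((∫ x, g x ∂μ) - Real.log (∫ x, Real.exp (g x) ∂ν) : ℝ) : EReal)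

section AuxLemmas

lemma ereal_coe_mul_iSup {ι : Sort*} {c : ℝ} (hc : 0 < c) (f : ι → EReal) :
    (c : EReal) * ⨆ i, f i = ⨆ i, (c : EReal) * f i := by
  have hinv : ∀ x : EReal, ((c⁻¹ : ℝ) : EReal) * ((c : EReal) * x) = x := fun x => by
    rw [← mul_assoc, ← EReal.coe_mul, inv_mul_cancel₀ hc.ne', EReal.coe_one, one_mul]
  have hinv' : ∀ x : EReal, ((c : ℝ) : EReal) * (((c⁻¹ : ℝ) : EReal) * x) = x := fun x => by
    rw [← mul_assoc, ← EReal.coe_mul, mul_inv_cancel₀ hc.ne', EReal.coe_one, one_mul]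
  have hc0 : (0 : EReal) ≤ (c : EReal) := by exact_mod_cast hc.le
  have hc0' : (0 : EReal) ≤ ((c⁻¹ : ℝ) : EReal) := by exact_mod_cast (inv_pos.2 hc).le
  let e : EReal ≃o EReal :=
    { toFun := fun x => (c : EReal) * x
      invFun := fun x => ((c⁻¹ : ℝ) : EReal) * x
      left_inv := hinv
      right_inv := hinv'
      map_rel_iff' := by
        intro a b
        constructor
        · intro h
          have h' : (c : EReal) * a ≤ (c : EReal) * b := h
          have h2 := mul_le_mul_of_nonneg_left h' hc0'
          rwa [hinv, hinv] at h2
        · intro h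
          exact mul_le_mul_of_nonneg_left h hc0 }
  exact e.map_iSup f

variable {S : Type*} [TopologicalSpace S] [MeasurableSpace S] [OpensMeasurableSpace S]
  (ν : Measure S) [IsProbabilityMeasure ν] (g : S →ᵇ ℝ)

lemma bcf_exp_integrable (δ : ℝ) : Integrable (fun x => Real.exp (δ * g x)) ν := by
  refine (integrable_const (Real.exp (|δ| * ‖g‖))).mono'
    ((Real.continuous_exp.comp (continuous_const.mul g.continuous)).aestronglyMeasurable)
    (ae_of_all _ fun x => ?_)
  rw [Real.norm_eq_abs, Real.abs_exp]
  refine Real.exp_le_exp.2 ?_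
  calc δ * g x ≤ |δ * g x| := le_abs_self _
    _ = |δ| * |g x| := abs_mul _ _
    _ ≤ |δ| * ‖g‖ :=
        mul_le_mul_of_nonneg_left (by simpa using g.norm_coe_le_norm x) (abs_nonneg δ)

lemma bcf_exp_integral_pos (δ : ℝ) : 0 < ∫ x, Real.exp (δ * g x) ∂ν := by
  have : NeZero ν := ⟨IsProbabilityMeasure.ne_zero ν⟩
  exact integral_exp_pos (bcf_exp_integrable ν g δ)

lemma mul_integral_le_log_integral_exp (δ : ℝ) :
    δ * ∫ x, g x ∂ν ≤ Real.log (∫ x, Real.exp (δ * g x) ∂ν) := by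
  set c : ℝ := δ * ∫ x, g x ∂ν with hc
  rw [Real.le_log_iff_exp_le (bcf_exp_integral_pos ν g δ)]
  have hgint : Integrable (fun x => g x) ν := g.integrable ν
  have hint1 : Integrable (fun x => δ * g x - c + 1) ν :=
    ((hgint.const_mul δ).sub (integrable_const c)).add (integrable_const 1)
  have hint2 : Integrable (fun x => Real.exp (δ * g x - c)) ν := by
    have h : (fun x => Real.exp (δ * g x - c)) = fun x => Real.exp (δ * g x) * Real.exp (-c) := by
      funext x; rw [← Real.exp_add]; ring_nf
    rw [h]
    exact (bcf_exp_integrable ν g δ).mul_const _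
  have key : (1 : ℝ) ≤ Real.exp (-c) * ∫ x, Real.exp (δ * g x) ∂ν := by
    have ha : Integrable (fun x => δ * g x - c) ν := (hgint.const_mul δ).sub (integrable_const c)
    have hb : Integrable (fun x => δ * g x) ν := hgint.const_mul δ
    have h1 : ∫ x, (δ * g x - c + 1) ∂ν = 1 := by
      rw [integral_add ha (integrable_const 1), integral_sub hb (integrable_const c),
        integral_const_mul]
      simp [hc]
    have h2 : ∫ x, (δ * g x - c + 1) ∂ν ≤ ∫ x, Real.exp (δ * g x - c) ∂ν :=
      integral_mono hint1 hint2 fun x => Real.add_one_le_exp _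
    have h3 : ∫ x, Real.exp (δ * g x - c) ∂ν = Real.exp (-c) * ∫ x, Real.exp (δ * g x) ∂ν := by
      rw [← integral_const_mul]
      congr 1; funext x; rw [← Real.exp_add]; ring_nf
    rw [h1, h3] at h2; exact h2
  have h4 := mul_le_mul_of_nonneg_left key (Real.exp_pos c).le
  rwa [mul_one, ← mul_assoc, ← Real.exp_add, add_neg_cancel, Real.exp_zero, one_mul] at h4

lemma log_integral_exp_le (δ : ℝ) (hδ : 0 < δ) (hδ1 : δ * (‖g‖ + 1) ≤ 1) :
    Real.log (∫ x, Real.exp (δ * g x) ∂ν) ≤ δ * ∫ x, g x ∂ν + δ ^ 2 * (‖g‖ + 1) ^ 2 := by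
  have hgint : Integrable (fun x => g x) ν := g.integrable ν
  have hbound : ∀ x, Real.exp (δ * g x) ≤ 1 + δ * g x + δ ^ 2 * (‖g‖ + 1) ^ 2 := by
    intro x
    have hgx : |g x| ≤ ‖g‖ + 1 :=
      le_trans (by simpa using g.norm_coe_le_norm x) (by linarith [norm_nonneg g])
    have hx : |δ * g x| ≤ 1 := by
      rw [abs_mul, abs_of_pos hδ]
      refine le_trans (mul_le_mul_of_nonneg_left hgx hδ.le) hδ1
    have h1 := Real.abs_exp_sub_one_sub_id_le hx
    have h2 : Real.exp (δ * g x) ≤ 1 + δ * g x + (δ * g x) ^ 2 := by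
      rcases abs_le.1 h1 with ⟨_, h1b⟩; linarith
    refine h2.trans ?_
    have h3 : (δ * g x) ^ 2 ≤ δ ^ 2 * (‖g‖ + 1) ^ 2 := by
      rw [mul_pow]
      refine mul_le_mul_of_nonneg_left ?_ (sq_nonneg δ)
      calc (g x) ^ 2 = |g x| ^ 2 := (sq_abs _).symm
        _ ≤ (‖g‖ + 1) ^ 2 := pow_le_pow_left₀ (abs_nonneg _) hgx 2
    linarith
  have hI : ∫ x, Real.exp (δ * g x) ∂ν ≤ 1 + δ * ∫ x, g x ∂ν + δ ^ 2 * (‖g‖ + 1) ^ 2 := by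
    have hb : Integrable (fun x => δ * g x) ν := hgint.const_mul δ
    have hb1 : Integrable (fun x => (1 : ℝ) + δ * g x) ν := (integrable_const 1).add hb
    have hb2 : Integrable (fun x => (1 : ℝ) + δ * g x + δ ^ 2 * (‖g‖ + 1) ^ 2) ν :=
      hb1.add (integrable_const _)
    have h := integral_mono (bcf_exp_integrable ν g δ) hb2 hbound
    rw [integral_add hb1 (integrable_const (δ ^ 2 * (‖g‖ + 1) ^ 2)),
      integral_add (integrable_const 1) hb, integral_const_mul] at h
    simpa using h
  have hlog := Real.log_le_sub_one_of_pos (bcf_exp_integral_pos ν g δ)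
  linarith

lemma tendsto_inv_log_integral_exp :
    Tendsto (fun δ : ℝ => δ⁻¹ * Real.log (∫ x, Real.exp (δ * g x) ∂ν))
      (nhdsWithin 0 (Set.Ioi 0)) (nhds (∫ x, g x ∂ν)) := by
  have hK : (0 : ℝ) < ‖g‖ + 1 := by positivity
  have hupper : Tendsto (fun δ : ℝ => ∫ x, g x ∂ν + δ * (‖g‖ + 1) ^ 2)
      (nhdsWithin 0 (Set.Ioi 0)) (nhds (∫ x, g x ∂ν)) := by
    have h : Tendsto (fun δ : ℝ => ∫ x, g x ∂ν + δ * (‖g‖ + 1) ^ 2) (nhds 0)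
        (nhds (∫ x, g x ∂ν + 0 * (‖g‖ + 1) ^ 2)) :=
      tendsto_const_nhds.add (tendsto_id.mul tendsto_const_nhds)
    simpa using h.mono_left nhdsWithin_le_nhds
  refine tendsto_of_tendsto_of_tendsto_of_le_of_le' tendsto_const_nhds hupper ?_ ?_
  · filter_upwards [self_mem_nhdsWithin] with δ hδ
    have hδ' : (0 : ℝ) < δ := hδ
    have h := mul_integral_le_log_integral_exp ν g δ
    calc ∫ x, g x ∂ν = δ⁻¹ * (δ * ∫ x, g x ∂ν) := by field_simp
      _ ≤ δ⁻¹ * Real.log (∫ x, Real.exp (δ * g x) ∂ν) :=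
          mul_le_mul_of_nonneg_left h (inv_pos.2 hδ').le
  · filter_upwards [Ioo_mem_nhdsGT_of_mem
      (Set.mem_Ico.2 ⟨le_refl (0 : ℝ), inv_pos.2 hK⟩)] with δ hδ
    have hδ' : (0 : ℝ) < δ := hδ.1
    have hδ1 : δ * (‖g‖ + 1) ≤ 1 := by
      have h2 : δ < 1 / (‖g‖ + 1) := by simpa [one_div] using hδ.2
      exact ((lt_div_iff₀ hK).1 h2).le
    have h := log_integral_exp_le ν g δ hδ' hδ1
    calc δ⁻¹ * Real.log (∫ x, Real.exp (δ * g x) ∂ν)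
        ≤ δ⁻¹ * (δ * ∫ x, g x ∂ν + δ ^ 2 * (‖g‖ + 1) ^ 2) :=
          mul_le_mul_of_nonneg_left h (inv_pos.2 hδ').le
      _ = ∫ x, g x ∂ν + δ * (‖g‖ + 1) ^ 2 := by field_simp

end AuxLemmas

/-- `lim_{δ→0⁺} (1/δ) G_{δΓ₀}(μ‖ν) = W_{Γ₀}(μ−ν)`. -/
theorem gDiv_scale_small_tendsto_wGamma
    {S : Type*} [TopologicalSpace S] [PolishSpace S] [MeasurableSpace S] [BorelSpace S]
    (Γ₀ : Set (S →ᵇ ℝ)) (hΓ : Admissible Γ₀)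
    (μ ν : Measure S) [IsProbabilityMeasure μ] [IsProbabilityMeasure ν] :
    Tendsto (fun δ : ℝ => ((δ⁻¹ : ℝ) : EReal) * gDiv (scaleSet δ Γ₀) μ ν)
      (nhdsWithin 0 (Set.Ioi 0)) (nhds (wGamma Γ₀ μ ν)) := by
  have hrew : ∀ δ : ℝ, 0 < δ →
      ((δ⁻¹ : ℝ) : EReal) * gDiv (scaleSet δ Γ₀) μ ν
        = ⨆ g ∈ Γ₀, (((∫ x, g x ∂μ) - δ⁻¹ * Real.log (∫ x, Real.exp (δ * g x) ∂ν) : ℝ) : EReal) := by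
    intro δ hδ
    have hδ0 : δ ≠ 0 := ne_of_gt hδ
    have h1 : gDiv (scaleSet δ Γ₀) μ ν
        = ⨆ g ∈ Γ₀, (((δ * ∫ x, g x ∂μ) - Real.log (∫ x, Real.exp (δ * g x) ∂ν) : ℝ) : EReal) := by
      rw [gDiv, scaleSet, iSup_image]
      refine iSup_congr fun g => iSup_congr fun hg => ?_
      have hs : ∀ x : S, (δ • g) x = δ * g x := fun x => by simp
      norm_cast
      simp_rw [hs]
      rw [integral_const_mul]
    rw [h1, ereal_coe_mul_iSup (inv_pos.2 hδ)]
    refine iSup_congr fun g => ?_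
    rw [ereal_coe_mul_iSup (inv_pos.2 hδ)]
    refine iSup_congr fun hg => ?_
    rw [← EReal.coe_mul]
    congr 1
    field_simp
  have hmem : ∀ᶠ δ : ℝ in nhdsWithin 0 (Set.Ioi 0), (0 : ℝ) < δ := self_mem_nhdsWithin
  refine tendsto_of_le_liminf_of_limsup_le ?_ ?_
  · rw [wGamma]
    refine iSup₂_le fun g hg => ?_
    have hlim : Tendsto (fun δ : ℝ =>
        (((∫ x, g x ∂μ) - δ⁻¹ * Real.log (∫ x, Real.exp (δ * g x) ∂ν) : ℝ) : EReal))
        (nhdsWithin 0 (Set.Ioi 0)) (nhds (((∫ x, g x ∂μ) - ∫ x, g x ∂ν : ℝ) : EReal)) := by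
      rw [EReal.tendsto_coe]
      exact tendsto_const_nhds.sub (tendsto_inv_log_integral_exp ν g)
    rw [← hlim.liminf_eq]
    refine liminf_le_liminf ?_
    filter_upwards [hmem] with δ hδ
    rw [hrew δ hδ]
    exact le_iSup₂ (f := fun g (_ : g ∈ Γ₀) =>
      (((∫ x, g x ∂μ) - δ⁻¹ * Real.log (∫ x, Real.exp (δ * g x) ∂ν) : ℝ) : EReal)) g hg
  · refine limsup_le_of_le (by isBoundedDefault) ?_
    filter_upwards [hmem] with δ hδ
    rw [hrew δ hδ]
    refine iSup₂_le fun g hg => ?_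
    refine le_trans ?_ (le_iSup₂ (f := fun g (_ : g ∈ Γ₀) =>
      (((∫ x, g x ∂μ) - ∫ x, g x ∂ν : ℝ) : EReal)) g hg)
    rw [EReal.coe_le_coe_iff]
    have h3 := mul_integral_le_log_integral_exp ν g δ
    have h4 : ∫ x, g x ∂ν ≤ δ⁻¹ * Real.log (∫ x, Real.exp (δ * g x) ∂ν) := by
      calc ∫ x, g x ∂ν = δ⁻¹ * (δ * ∫ x, g x ∂ν) := by field_simp
        _ ≤ _ := mul_le_mul_of_nonneg_left h3 (inv_pos.2 hδ).le
    linarith
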